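/- Let m ≥ 2 and let c be an integer with 1 ≤ c < m and c·g ≡ -1 (mod m) for a given g with gcd(g,m)=1. Then the smallest positive rational λ such that λ·[m,-g] - [0,1/m] ∈ ℤ² is λ = c/m, and the resulting lattice point is [c, -(g·c+1)/m]. -/

import Mathlib

/-- the smallest positive rational λ with
λ·[m,-g] - [0,1/m] ∈ ℤ² is λ = c/m, and the resulting lattice point is
[c, -(g·c+1)/m]. -/
theorem stmt10 (m g c : ℤ) (hm : 2 ≤ m) (hgm : Int.gcd g m = 1)
    (hc1 : 1 ≤ c) (hcm : c < m) (hcg : c * g ≡ -1 [ZMOD m]) :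
    IsLeast {l : ℚ | 0 < l ∧
        ∃ p : ℤ × ℤ, l • ((m : ℚ), (-g : ℚ)) - ((0 : ℚ), 1 / (m : ℚ))
          = ((p.1 : ℚ), (p.2 : ℚ))} ((c : ℚ) / m) ∧
    ((c : ℚ) / m) • ((m : ℚ), (-g : ℚ)) - ((0 : ℚ), 1 / (m : ℚ))
      = ((c : ℚ), -((g * c + 1 : ℤ) : ℚ) / m) := by
  have hm0 : (0 : ℤ) < m := by omega
  have hmQ : (m : ℚ) ≠ 0 := by exact_mod_cast hm0.ne'
  have hmQ0 : (0 : ℚ) < (m : ℚ) := by exact_mod_cast hm0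
  -- m ∣ g*c + 1
  have hdvd : m ∣ g * c + 1 := by
    have := hcg.dvd
    have : m ∣ -1 - c * g := this
    obtain ⟨k, hk⟩ := this
    exact ⟨-k, by linarith [hk]⟩
  obtain ⟨k, hk⟩ := hdvd
  have heq : ((c : ℚ) / m) • ((m : ℚ), (-g : ℚ)) - ((0 : ℚ), 1 / (m : ℚ))
      = ((c : ℚ), -((g * c + 1 : ℤ) : ℚ) / m) := by
    rw [Prod.smul_mk, Prod.mk_sub_mk, Prod.mk.injEq]
    constructor
    · rw [smul_eq_mul, sub_zero]; field_simp
    · rw [smul_eq_mul]; push_cast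
      field_simp
      ring
  refine ⟨⟨⟨by positivity, ⟨(c, -k), ?_⟩⟩, ?_⟩, heq⟩
  · rw [heq]
    have : ((-k : ℤ) : ℚ) = -((g * c + 1 : ℤ) : ℚ) / m := by
      rw [hk]; push_cast; field_simp
    simp [this]
  · rintro l ⟨hl0, ⟨p, hp⟩⟩
    rw [Prod.smul_mk, Prod.mk_sub_mk, Prod.mk.injEq] at hp
    obtain ⟨h1, h2⟩ := hp
    have hlval : l = (p.1 : ℚ) / m := by
      rw [smul_eq_mul, sub_zero] at h1; field_simp
      linarith [h1]
    have hp1pos : (0 : ℤ) < p.1 := by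
      have : (0 : ℚ) < (p.1 : ℚ) := by
        rw [hlval] at hl0
        exact (div_pos_iff.mp hl0).resolve_right (fun h => absurd hmQ0 (not_lt.mpr h.2.le)) |>.1
      exact_mod_cast this
    -- m ∣ p.1 * g + 1
    have hdvd2 : m ∣ p.1 * g + 1 := by
      have h2' : (p.1 : ℚ) / m * (-g) - 1 / m = (p.2 : ℚ) := by rw [← hlval]; exact h2
      have : ((p.1 * g + 1 : ℤ) : ℚ) = ((-(p.2 * m) : ℤ) : ℚ) := by
        push_cast
        field_simp at h2'
        have hmul : ((p.1 : ℚ) * g + 1) * m = (-((p.2 : ℚ) * m)) * m := by linear_combination (-(m:ℚ)) * h2'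
        exact mul_right_cancel₀ hmQ hmul
      have hz : p.1 * g + 1 = -(p.2 * m) := by exact_mod_cast this
      exact ⟨-p.2, by linarith [hz]⟩
    -- m ∣ (p.1 - c) * g hence m ∣ p.1 - c
    have hdvd3 : m ∣ (p.1 - c) * g := by
      obtain ⟨a, ha⟩ := hdvd2
      exact ⟨a - k, by ring_nf; ring_nf at ha hk; linarith [ha, hk]⟩
    have hcop : Int.gcd m g = 1 := by rwa [Int.gcd_comm]
    have hdvd4 : m ∣ p.1 - c := (Int.isCoprime_iff_gcd_eq_one.mpr hcop).dvd_of_dvd_mul_right hdvd3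
    have hge : c ≤ p.1 := by
      by_contra hlt
      push_neg at hlt
      obtain ⟨t, ht⟩ := hdvd4
      have hdvd5 : m ∣ c - p.1 := ⟨-t, by rw [mul_neg, ← ht]; ring⟩
      have := Int.le_of_dvd (by omega) hdvd5
      omega
    rw [hlval]
    have hcp : (c : ℚ) ≤ (p.1 : ℚ) := by exact_mod_cast hge
    gcongr
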